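/- arXiv:2109.11537 — 2 statements merged into one kernel-verified Lean document; each statement's English description precedes it below -/
import Mathlib

section
/- Let 1 ≤ q ≤ 2, let t ∈ ℝⁿ satisfy 1/2 ≤ t_i ≤ 1 for all i ∈ [n], let A ∈ ℝ^{n×d} have full column rank, and let y = Ax for some x ∈ ℝ^d. Let τ_i = a_iᵀ(AᵀA)⁻¹a_i be the leverage scores of A, let h ≥ 1 and p_i = h·√τ_i. Then max_{i∈[n]} (1/p_i)·γ_q(t_i, y_i) ≤ (16/h)·Σ_{i∈[n]} γ_q(t_i, y_i). -/
open Matrix Finset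

/-- The smoothed `q`-norm function `γ_q(t,x)`. -/
noncomputable def gammaFn (q t x : ℝ) : ℝ :=
  if |x| ≤ t then (q / 2) * t ^ (q - 2) * x ^ 2
  else |x| ^ q + (q / 2 - 1) * t ^ q

/-- The leverage score `τ_i(A) = a_iᵀ(AᵀA)⁻¹a_i` of the `i`-th row of `A`. -/
noncomputable def lev {n d : ℕ} (A : Matrix (Fin n) (Fin d) ℝ) (i : Fin n) : ℝ :=
  A i ⬝ᵥ ((Aᵀ * A)⁻¹.mulVec (A i))

lemma abs_rpow_two (y : ℝ) : |y| ^ (2:ℝ) = y ^ 2 := by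
  rw [show (2:ℝ) = ((2:ℕ):ℝ) by norm_num, Real.rpow_natCast, sq_abs]

lemma gamma_lb {q t : ℝ} (hq1 : 1 ≤ q) (hq2 : q ≤ 2) (ht1 : 1/2 ≤ t) (ht2 : t ≤ 1)
    (y : ℝ) : min (y ^ 2) (|y| ^ q) ≤ 2 * gammaFn q t y := by
  have ht0 : 0 < t := by linarith
  unfold gammaFn
  split_ifs with hy
  · have h1 : (1:ℝ) ≤ t ^ (q - 2) :=
      Real.one_le_rpow_of_pos_of_le_one_of_nonpos ht0 ht2 (by linarith)
    have h2 : 1 * y ^ 2 ≤ (q * t ^ (q-2)) * y ^ 2 :=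
      mul_le_mul_of_nonneg_right (by nlinarith) (sq_nonneg y)
    have := min_le_left (y ^ 2) (|y| ^ q)
    linarith
  · push_neg at hy
    have htq : t ^ q ≤ |y| ^ q := Real.rpow_le_rpow (le_of_lt ht0) hy.le (by linarith)
    have := min_le_right (y ^ 2) (|y| ^ q)
    nlinarith [Real.rpow_nonneg (le_of_lt ht0) q]

lemma gamma_nonneg {q t : ℝ} (hq1 : 1 ≤ q) (hq2 : q ≤ 2) (ht1 : 1/2 ≤ t) (ht2 : t ≤ 1)
    (y : ℝ) : 0 ≤ gammaFn q t y := by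
  have h := gamma_lb hq1 hq2 ht1 ht2 y
  have h0 : (0:ℝ) ≤ min (y ^ 2) (|y| ^ q) :=
    le_min (sq_nonneg y) (Real.rpow_nonneg (abs_nonneg y) q)
  linarith

lemma gamma_ub {q t : ℝ} (hq1 : 1 ≤ q) (hq2 : q ≤ 2) (ht1 : 1/2 ≤ t) (ht2 : t ≤ 1)
    (y : ℝ) : gammaFn q t y ≤ 4 * min (y ^ 2) (|y| ^ q) := by
  have ht0 : 0 < t := by linarith
  have hq0 : (0:ℝ) < q := by linarith
  have key : gammaFn q t y ≤ 4 * y ^ 2 ∧ gammaFn q t y ≤ 4 * (|y| ^ q) := by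
    unfold gammaFn
    split_ifs with hy
    · rcases eq_or_lt_of_le (abs_nonneg y) with h0 | h0
      · constructor <;>
          simp [← h0, abs_eq_zero.mp h0.symm, Real.zero_rpow (ne_of_gt hq0)]
      · have h1 : t ^ (q-2) ≤ ((1:ℝ)/2) ^ (q-2) :=
          Real.rpow_le_rpow_of_nonpos (by norm_num) ht1 (by linarith)
        have h2 : ((1:ℝ)/2) ^ (q-2) ≤ 2 := by
          rw [one_div, Real.inv_rpow (by norm_num : (0:ℝ) ≤ 2),
            ← Real.rpow_neg (by norm_num : (0:ℝ) ≤ 2)]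
          calc (2:ℝ) ^ (-(q-2)) ≤ 2 ^ (1:ℝ) :=
                Real.rpow_le_rpow_of_exponent_le one_le_two (by linarith)
            _ = 2 := Real.rpow_one 2
        have h3 : t ^ (q-2) ≤ |y| ^ (q-2) :=
          Real.rpow_le_rpow_of_nonpos h0 hy (by linarith)
        have h4 : |y| ^ (q-2) * y ^ 2 = |y| ^ q := by
          rw [← abs_rpow_two, ← Real.rpow_add h0]; norm_num
        constructor
        · have := mul_le_mul_of_nonneg_right (h1.trans h2) (sq_nonneg y)
          nlinarith [sq_nonneg y]
        · have h5 := mul_le_mul_of_nonneg_right h3 (sq_nonneg y)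
          rw [h4] at h5
          nlinarith [Real.rpow_nonneg (le_of_lt ht0) (q-2), sq_nonneg y,
            Real.rpow_nonneg (abs_nonneg y) q]
    · push_neg at hy
      have hyq : |y| ^ q + (q / 2 - 1) * t ^ q ≤ |y| ^ q := by
        nlinarith [Real.rpow_nonneg (le_of_lt ht0) q]
      have hq4 : |y| ^ q ≤ 4 * y ^ 2 := by
        rcases le_or_gt 1 |y| with h1 | h1
        · have h2 : |y| ^ q ≤ |y| ^ (2:ℝ) := Real.rpow_le_rpow_of_exponent_le h1 hq2
          rw [abs_rpow_two] at h2
          nlinarith [sq_nonneg y]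
        · have h2 : |y| ^ q ≤ 1 := Real.rpow_le_one (abs_nonneg y) h1.le hq0.le
          nlinarith [sq_abs y, abs_nonneg y]
      exact ⟨by linarith, by nlinarith [Real.rpow_nonneg (abs_nonneg y) q]⟩
  rcases le_total (y ^ 2) (|y| ^ q) with h | h
  · rw [min_eq_left h]; exact key.1
  · rw [min_eq_right h]; exact key.2

lemma core {n : ℕ} {q : ℝ} (hq1 : 1 ≤ q) (hq2 : q ≤ 2)
    (t : Fin n → ℝ) (ht1 : ∀ i, (1:ℝ)/2 ≤ t i) (ht2 : ∀ i, t i ≤ 1)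
    (y w : Fin n → ℝ) (i : Fin n)
    (hwi : w i = ∑ k, (w k) ^ 2) (hyi : y i = ∑ k, w k * y k) :
    gammaFn q (t i) (y i) ≤ 16 * Real.sqrt (w i) * ∑ k, gammaFn q (t k) (y k) := by
  have hq0 : (0:ℝ) < q := by linarith
  set τ := w i with hτdef
  have hτ0 : 0 ≤ τ := by rw [hwi]; positivity
  set m : Fin n → ℝ := fun k => min ((y k) ^ 2) (|y k| ^ q) with hm
  have hm0 : ∀ k, 0 ≤ m k := fun k =>
    le_min (sq_nonneg _) (Real.rpow_nonneg (abs_nonneg _) q)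
  set T := ∑ k, m k with hT
  set S := ∑ k, gammaFn q (t k) (y k) with hS
  have hS0 : 0 ≤ S := Finset.sum_nonneg fun k _ => gamma_nonneg hq1 hq2 (ht1 k) (ht2 k) _
  have hT0 : 0 ≤ T := Finset.sum_nonneg fun k _ => hm0 k
  have hTS : T ≤ 2 * S := by
    rw [hT, hS, Finset.mul_sum]
    exact Finset.sum_le_sum fun k _ => gamma_lb hq1 hq2 (ht1 k) (ht2 k) _
  have hmT : ∀ k, m k ≤ T := fun k =>
    Finset.single_le_sum (f := m) (fun j _ => hm0 j) (Finset.mem_univ k)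
  -- τ ≤ 1
  have hτ1 : τ ≤ 1 := by
    have h1 : (w i) ^ 2 ≤ ∑ k, (w k) ^ 2 :=
      Finset.single_le_sum (f := fun k => (w k)^2) (fun j _ => sq_nonneg _)
        (Finset.mem_univ i)
    have h2 : τ ^ 2 ≤ τ := by show (w i) ^ 2 ≤ τ; rw [hwi]; exact h1
    nlinarith
  set r := Real.sqrt τ with hr
  have hr0 : 0 ≤ r := Real.sqrt_nonneg τ
  have hr2 : r ^ 2 = τ := Real.sq_sqrt hτ0
  have hτr : τ ≤ r := by
    have : r ≤ 1 := Real.sqrt_le_one.mpr hτ1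
    nlinarith
  -- Cauchy-Schwarz
  have hCS : (y i) ^ 2 ≤ τ * ∑ k, (y k) ^ 2 := by
    rw [hyi, hwi]
    exact Finset.sum_mul_sq_le_sq_mul_sq Finset.univ w y
  have hGy0 : 0 ≤ ∑ k, (y k) ^ 2 := Finset.sum_nonneg fun k _ => sq_nonneg _
  -- key: m i ≤ r * T
  have hkey : m i ≤ r * T := by
    rcases le_or_gt T 1 with hTle | hTgt
    · -- all |y k| ≤ 1 so y² ≤ m
      have hsq : ∀ k, (y k) ^ 2 ≤ m k := by
        intro k
        have hk1 : |y k| ≤ 1 := by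
          by_contra hc
          push_neg at hc
          have h1 : (1:ℝ) < (y k) ^ 2 := by nlinarith [sq_abs (y k)]
          have h2 : (1:ℝ) < |y k| ^ q := by
            calc (1:ℝ) < |y k| := hc
              _ = |y k| ^ (1:ℝ) := (Real.rpow_one _).symm
              _ ≤ |y k| ^ q := Real.rpow_le_rpow_of_exponent_le hc.le hq1
          have := hmT k
          have : (1:ℝ) < m k := lt_min h1 h2
          linarith
        rcases eq_or_lt_of_le (abs_nonneg (y k)) with h0 | h0
        · have : y k = 0 := abs_eq_zero.mp h0.symm
          simp [hm, this, Real.zero_rpow (ne_of_gt hq0)]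
        · have : (y k) ^ 2 ≤ |y k| ^ q := by
            have h2 := Real.rpow_le_rpow_of_exponent_ge h0 hk1 hq2
            rwa [abs_rpow_two] at h2
          exact le_min le_rfl this
      have hGT : ∑ k, (y k) ^ 2 ≤ T := Finset.sum_le_sum fun k _ => hsq k
      have h1 : m i ≤ (y i) ^ 2 := min_le_left _ _
      calc m i ≤ τ * T := by nlinarith
        _ ≤ r * T := mul_le_mul_of_nonneg_right hτr hT0
    · -- T > 1
      have hT0' : (0:ℝ) < T := by linarith
      have he0 : (0:ℝ) ≤ 2/q - 1 := by
        have : (1:ℝ) ≤ 2/q := (one_le_div hq0).mpr (by linarith)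
        linarith
      have hGy : ∑ k, (y k) ^ 2 ≤ T ^ (2/q) := by
        have hstep : ∀ k, (y k) ^ 2 ≤ m k * T ^ (2/q - 1) := by
          intro k
          have hTe1 : (1:ℝ) ≤ T ^ (2/q - 1) := Real.one_le_rpow hTgt.le he0
          rcases le_or_gt (|y k|) 1 with hk1 | hk1
          · have hy2m : (y k) ^ 2 ≤ m k := by
              rcases eq_or_lt_of_le (abs_nonneg (y k)) with h0 | h0
              · have : y k = 0 := abs_eq_zero.mp h0.symm
                simp [hm, this, Real.zero_rpow (ne_of_gt hq0)]
              · have h2 := Real.rpow_le_rpow_of_exponent_ge h0 hk1 hq2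
                rw [abs_rpow_two] at h2
                exact le_min le_rfl h2
            nlinarith [hm0 k]
          · -- |y k| > 1 : m k = |y k|^q, y² = (m k)^(2/q)
            have hmq : m k = |y k| ^ q := by
              have : |y k| ^ q ≤ (y k) ^ 2 := by
                have h2 := Real.rpow_le_rpow_of_exponent_le hk1.le hq2
                rwa [abs_rpow_two] at h2
              exact min_eq_right this
            have hmk1 : (1:ℝ) < m k := by
              rw [hmq]
              calc (1:ℝ) < |y k| := hk1
                _ = |y k| ^ (1:ℝ) := (Real.rpow_one _).symm
                _ ≤ |y k| ^ q := Real.rpow_le_rpow_of_exponent_le hk1.le hq1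
            have hy2 : (y k) ^ 2 = (m k) ^ (2/q) := by
              rw [hmq, ← Real.rpow_mul (abs_nonneg _),
                show q * (2/q) = 2 by rw [mul_comm]; exact div_mul_cancel₀ 2 (ne_of_gt hq0),
                abs_rpow_two]
            have hsplit : (m k) ^ (2/q) = m k * (m k) ^ (2/q - 1) := by
              nth_rewrite 2 [show m k = m k ^ (1:ℝ) by rw [Real.rpow_one]]
              rw [← Real.rpow_add (by linarith)]
              norm_num
            have hle : (m k) ^ (2/q - 1) ≤ T ^ (2/q - 1) :=
              Real.rpow_le_rpow (hm0 k) (hmT k) he0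
            rw [hy2, hsplit]
            exact mul_le_mul_of_nonneg_left hle (hm0 k)
        calc ∑ k, (y k) ^ 2 ≤ ∑ k, m k * T ^ (2/q - 1) :=
              Finset.sum_le_sum fun k _ => hstep k
          _ = T * T ^ (2/q - 1) := by rw [← Finset.sum_mul]
          _ = T ^ (2/q) := by
              nth_rewrite 1 [show T = T ^ (1:ℝ) by rw [Real.rpow_one]]
              rw [← Real.rpow_add hT0']
              norm_num
      have h1 : m i ≤ |y i| ^ q := min_le_right _ _
      have h2 : |y i| ^ q = ((y i) ^ 2) ^ (q/2) := by
        rw [← abs_rpow_two, ← Real.rpow_mul (abs_nonneg _),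
          show (2:ℝ) * (q/2) = q by ring]
      have h3 : ((y i) ^ 2) ^ (q/2) ≤ (τ * T ^ (2/q)) ^ (q/2) := by
        apply Real.rpow_le_rpow (sq_nonneg _) _ (by linarith)
        calc (y i) ^ 2 ≤ τ * ∑ k, (y k) ^ 2 := hCS
          _ ≤ τ * T ^ (2/q) := mul_le_mul_of_nonneg_left hGy hτ0
      have h4 : (τ * T ^ (2/q)) ^ (q/2) = τ ^ (q/2) * T := by
        rw [Real.mul_rpow hτ0 (Real.rpow_nonneg hT0 _), ← Real.rpow_mul hT0]
        rw [show 2/q * (q/2) = q / q * 1 by ring, div_self (ne_of_gt hq0), one_mul,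
          Real.rpow_one]
      have h5 : τ ^ (q/2) ≤ r := by
        rcases eq_or_lt_of_le hτ0 with h0 | h0
        · rw [← h0, Real.zero_rpow (by positivity : q/2 ≠ 0), hr, ← h0, Real.sqrt_zero]
        · rw [hr, Real.sqrt_eq_rpow]
          exact Real.rpow_le_rpow_of_exponent_ge h0 hτ1 (by linarith)
      calc m i ≤ |y i| ^ q := h1
        _ = ((y i) ^ 2) ^ (q/2) := h2
        _ ≤ (τ * T ^ (2/q)) ^ (q/2) := h3
        _ = τ ^ (q/2) * T := h4
        _ ≤ r * T := mul_le_mul_of_nonneg_right h5 hT0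
  -- conclude
  calc gammaFn q (t i) (y i) ≤ 4 * m i := gamma_ub hq1 hq2 (ht1 i) (ht2 i) _
    _ ≤ 4 * (r * T) := by linarith
    _ ≤ 16 * r * S := by nlinarith

/-- with `1 ≤ q ≤ 2`, `1/2 ≤ t_i ≤ 1`, `A` of full column rank, `y = Ax`,
`h ≥ 1` and `p_i = h√τ_i`:
`max_i (1/p_i)γ_q(t_i, y_i) ≤ (16/h)·Σ_i γ_q(t_i, y_i)`
(stated as the bound holding for every index `i`). -/
theorem stmt3 (n d : ℕ) (q : ℝ) (hq1 : 1 ≤ q) (hq2 : q ≤ 2)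
    (t : Fin n → ℝ) (ht1 : ∀ i, (1 : ℝ) / 2 ≤ t i) (ht2 : ∀ i, t i ≤ 1)
    (A : Matrix (Fin n) (Fin d) ℝ) (hA : A.rank = d)
    (x : Fin d → ℝ) (h : ℝ) (hh : 1 ≤ h) (i : Fin n) :
    (1 / (h * Real.sqrt (lev A i))) * gammaFn q (t i) ((A.mulVec x) i)
      ≤ (16 / h) * ∑ k, gammaFn q (t k) ((A.mulVec x) k) := by
  have hh0 : 0 < h := by linarith
  set y : Fin n → ℝ := A.mulVec x with hy
  set S := ∑ k, gammaFn q (t k) (y k) with hS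
  have hS0 : 0 ≤ S := Finset.sum_nonneg fun k _ => gamma_nonneg hq1 hq2 (ht1 k) (ht2 k) _
  -- invertibility of the Gram matrix
  have hdet : IsUnit (Aᵀ * A).det := by
    rw [← Matrix.isUnit_iff_isUnit_det, ← Matrix.mulVec_surjective_iff_isUnit]
    have hrank : (Aᵀ * A).rank = d := by rw [Matrix.rank_transpose_mul_self, hA]
    have htop : LinearMap.range (Aᵀ * A).mulVecLin = ⊤ := by
      apply Submodule.eq_top_of_finrank_eq
      rw [← Matrix.rank, hrank, Module.finrank_fin_fun]
    intro v
    obtain ⟨u, hu⟩ := LinearMap.range_eq_top.mp htop v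
    exact ⟨u, hu⟩
  set u : Fin d → ℝ := (Aᵀ * A)⁻¹.mulVec (A i) with hu
  set w : Fin n → ℝ := A.mulVec u with hw
  have key : ∀ v : Fin d → ℝ, w ⬝ᵥ (A.mulVec v) = A i ⬝ᵥ v := by
    intro v
    rw [hw, Matrix.dotProduct_mulVec, ← Matrix.mulVec_transpose,
      Matrix.mulVec_mulVec, hu, Matrix.mulVec_mulVec,
      Matrix.mul_nonsing_inv _ hdet, Matrix.one_mulVec]
  have hwlev : w i = lev A i := by
    rw [hw]
    show A i ⬝ᵥ u = lev A i
    rfl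
  have hww : w ⬝ᵥ w = lev A i := by
    rw [show w ⬝ᵥ w = w ⬝ᵥ (A.mulVec u) from rfl, key u]
    rfl
  have hwi : w i = ∑ k, (w k) ^ 2 := by
    rw [hwlev, ← hww]
    simp [dotProduct, sq]
  have hyi : y i = ∑ k, w k * y k := by
    have h1 : w ⬝ᵥ y = A i ⬝ᵥ x := key x
    have h2 : y i = A i ⬝ᵥ x := rfl
    rw [h2, ← h1]
    rfl
  have hcore := core hq1 hq2 t ht1 ht2 y w i hwi hyi
  rw [hwlev] at hcore
  set r := Real.sqrt (lev A i) with hr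
  have hr0 : 0 ≤ r := Real.sqrt_nonneg _
  rcases eq_or_lt_of_le hr0 with h0 | h0
  · rw [← h0, mul_zero, div_zero, zero_mul]
    positivity
  · have step := mul_le_mul_of_nonneg_left hcore (le_of_lt (by positivity : (0:ℝ) < 1/(h*r)))
    calc (1/(h*r)) * gammaFn q (t i) (y i) ≤ (1/(h*r)) * (16 * r * S) := step
      _ = (16/h) * S := by field_simp
end

section
/- Let 2 ≤ p < ∞, A ∈ ℝ^{n×d}, b ∈ ℝⁿ, C ∈ ℝ^{d×d}, v ∈ ℝ^d. Let x* minimize ‖Ax − b‖_p^p subject to Cx = v and let x⁽⁰⁾ minimize ‖Ax − b‖₂² subject to Cx = v. Then ‖Ax⁽⁰⁾ − b‖_p^p ≤ n^{(p−2)/2} · ‖Ax* − b‖_p^p. -/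
open Matrix Finset

lemma sum_rpow_le_rpow_sum' {ι : Type*} (s : Finset ι) (f : ι → ℝ)
    (hf : ∀ i ∈ s, 0 ≤ f i) {q : ℝ} (hq : 1 ≤ q) :
    ∑ i ∈ s, f i ^ q ≤ (∑ i ∈ s, f i) ^ q := by
  have hq0 : q ≠ 0 := by linarith
  have hS : 0 ≤ ∑ i ∈ s, f i := Finset.sum_nonneg hf
  rcases eq_or_lt_of_le hS with h0 | h0
  · have hz : ∀ i ∈ s, f i = 0 := fun i hi =>
      le_antisymm (h0 ▸ Finset.single_le_sum hf hi) (hf i hi)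
    rw [← h0, Real.zero_rpow hq0]
    refine le_of_eq (Finset.sum_eq_zero fun i hi => ?_)
    rw [hz i hi, Real.zero_rpow hq0]
  · calc ∑ i ∈ s, f i ^ q ≤ ∑ i ∈ s, (∑ j ∈ s, f j) ^ (q - 1) * f i := by
          refine Finset.sum_le_sum fun i hi => ?_
          rcases eq_or_lt_of_le (hf i hi) with hfi0 | hfi0
          · rw [← hfi0, Real.zero_rpow hq0, mul_zero]
          · have hfi : f i ≤ ∑ j ∈ s, f j := Finset.single_le_sum hf hi
            calc f i ^ q = f i ^ (q - 1) * f i := by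
                  rw [← Real.rpow_add_one hfi0.ne' (q - 1)]; ring_nf
              _ ≤ (∑ j ∈ s, f j) ^ (q - 1) * f i :=
                  mul_le_mul_of_nonneg_right
                    (Real.rpow_le_rpow (hf i hi) hfi (by linarith)) (hf i hi)
      _ = (∑ j ∈ s, f j) ^ (q - 1) * ∑ i ∈ s, f i := by rw [← Finset.mul_sum]
      _ = (∑ i ∈ s, f i) ^ q := by
          rw [← Real.rpow_add_one h0.ne' (q - 1)]; ring_nf

/-- for `2 ≤ p < ∞`, if `x*` minimizes `‖Ax−b‖_p^p` subject to `Cx = v` and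
`x⁽⁰⁾` minimizes `‖Ax−b‖₂²` subject to `Cx = v`, then
`‖Ax⁽⁰⁾−b‖_p^p ≤ n^{(p−2)/2} ‖Ax*−b‖_p^p`. -/
theorem stmt8 (n d : ℕ) (p : ℝ) (hp : 2 ≤ p)
    (A : Matrix (Fin n) (Fin d) ℝ) (b : Fin n → ℝ)
    (C : Matrix (Fin d) (Fin d) ℝ) (v : Fin d → ℝ)
    (xstar x0 : Fin d → ℝ)
    (hxsF : C.mulVec xstar = v)
    (hxsMin : ∀ z, C.mulVec z = v →
      ∑ i, |(A.mulVec xstar - b) i| ^ p ≤ ∑ i, |(A.mulVec z - b) i| ^ p)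
    (hx0F : C.mulVec x0 = v)
    (hx0Min : ∀ z, C.mulVec z = v →
      ∑ i, ((A.mulVec x0 - b) i) ^ 2 ≤ ∑ i, ((A.mulVec z - b) i) ^ 2) :
    ∑ i, |(A.mulVec x0 - b) i| ^ p
      ≤ (n : ℝ) ^ ((p - 2) / 2) * ∑ i, |(A.mulVec xstar - b) i| ^ p := by
  set y0 : Fin n → ℝ := A.mulVec x0 - b with hy0
  set ys : Fin n → ℝ := A.mulVec xstar - b with hys
  have hq : (1 : ℝ) ≤ p / 2 := by linarith
  have key : ∀ y : ℝ, (y ^ 2) ^ (p / 2) = |y| ^ p := by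
    intro y
    rw [← sq_abs, ← Real.rpow_natCast |y| 2, ← Real.rpow_mul (abs_nonneg y)]
    push_cast
    rw [show (2:ℝ) * (p / 2) = p by ring]
  have h1 : ∑ i, |y0 i| ^ p ≤ (∑ i, (y0 i) ^ 2) ^ (p / 2) := by
    calc ∑ i, |y0 i| ^ p = ∑ i, ((y0 i) ^ 2) ^ (p / 2) := by
          exact Finset.sum_congr rfl fun i _ => (key (y0 i)).symm
      _ ≤ (∑ i, (y0 i) ^ 2) ^ (p / 2) :=
          sum_rpow_le_rpow_sum' _ _ (fun i _ => sq_nonneg _) hq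
  have h2 : (∑ i, (y0 i) ^ 2) ^ (p / 2) ≤ (∑ i, (ys i) ^ 2) ^ (p / 2) :=
    Real.rpow_le_rpow (Finset.sum_nonneg fun i _ => sq_nonneg _)
      (hx0Min xstar hxsF) (by linarith)
  have h3 : (∑ i, (ys i) ^ 2) ^ (p / 2)
      ≤ (n : ℝ) ^ ((p - 2) / 2) * ∑ i, |ys i| ^ p := by
    have := Real.rpow_sum_le_const_mul_sum_rpow_of_nonneg (Finset.univ)
      (f := fun i : Fin n => (ys i) ^ 2) hq (fun i _ => sq_nonneg _)
    simp only [Finset.card_univ, Fintype.card_fin] at this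
    calc (∑ i, (ys i) ^ 2) ^ (p / 2)
        ≤ (n : ℝ) ^ (p / 2 - 1) * ∑ i, ((ys i) ^ 2) ^ (p / 2) := this
      _ = (n : ℝ) ^ ((p - 2) / 2) * ∑ i, |ys i| ^ p := by
          rw [show p / 2 - 1 = (p - 2) / 2 by ring]
          congr 1
          exact Finset.sum_congr rfl fun i _ => key (ys i)
  exact le_trans h1 (le_trans h2 h3)
end
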